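/- arXiv:math/9804104 — 2 statements merged into one kernel-verified Lean document; each statement's English description precedes it below -/
import Mathlib

section
/- Let V be a multiplicative unitary on a finite-dimensional Hilbert space H. Suppose ξ₁,ξ₂,η₁,η₂ ∈ H satisfy V(ξ₁⊗η₁) = ξ₁⊗η₁ and V(ξ₂⊗η₂) = ξ₂⊗η₂. Then L(ω_{ξ₁,ξ₂}) L(ω_{η₁,η₂}) = ⟨ξ₁,ξ₂⟩ · L(ω_{η₁,η₂}) and ρ(ω_{ξ₁,ξ₂}) ρ(ω_{η₁,η₂}) = ⟨η₁,η₂⟩ · ρ(ω_{ξ₁,ξ₂}). -/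
open scoped InnerProductSpace ComplexOrder

noncomputable section

namespace MU

variable {ι : Type*} [Fintype ι] [DecidableEq ι]

/-- The elementary tensor `f ⊗ g` of two vectors, in the model
`H ⊗ H = EuclideanSpace ℂ (ι × ι)`. -/
def tens (f g : EuclideanSpace ℂ ι) : EuclideanSpace ℂ (ι × ι) :=
  WithLp.toLp 2 (fun p => f p.1 * g p.2)

/-- `g ↦ f ⊗ g` as a linear map. -/
def tensL (f : EuclideanSpace ℂ ι) :
    EuclideanSpace ℂ ι →ₗ[ℂ] EuclideanSpace ℂ (ι × ι) where
  toFun g := tens f g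
  map_add' x y := by
    ext p
    simp only [tens, PiLp.add_apply]; ring
  map_smul' c x := by
    ext p
    simp only [tens, PiLp.smul_apply, smul_eq_mul, RingHom.id_apply]; ring

/-- `f ↦ f ⊗ g` as a linear map. -/
def tensR (g : EuclideanSpace ℂ ι) :
    EuclideanSpace ℂ ι →ₗ[ℂ] EuclideanSpace ℂ (ι × ι) where
  toFun f := tens f g
  map_add' x y := by
    ext p
    simp only [tens, PiLp.add_apply]; ring
  map_smul' c x := by
    ext p
    simp only [tens, PiLp.smul_apply, smul_eq_mul, RingHom.id_apply]; ring

/-- Action of a matrix on a Euclidean space vector. -/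
def appM {κ : Type*} [Fintype κ] (M : Matrix κ κ ℂ) (v : EuclideanSpace ℂ κ) :
    EuclideanSpace ℂ κ :=
  WithLp.toLp 2 (fun i => ∑ j, M i j * v j)

/-- Action of a matrix as a linear map on the Euclidean space. -/
def mact {κ : Type*} [Fintype κ] (M : Matrix κ κ ℂ) :
    EuclideanSpace ℂ κ →ₗ[ℂ] EuclideanSpace ℂ κ where
  toFun := appM M
  map_add' x y := by
    ext i
    simp only [appM, PiLp.add_apply, mul_add, Finset.sum_add_distrib]
  map_smul' c x := by
    ext i
    simp only [appM, PiLp.smul_apply, smul_eq_mul, RingHom.id_apply, Finset.mul_sum]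
    refine Finset.sum_congr rfl fun j _ => ?_
    ring

/-- The leg `V₁₂` on `H ⊗ H ⊗ H`. -/
def leg12 (V : Matrix (ι × ι) (ι × ι) ℂ) : Matrix (ι × ι × ι) (ι × ι × ι) ℂ :=
  fun p q => V (p.1, p.2.1) (q.1, q.2.1) * (if p.2.2 = q.2.2 then 1 else 0)

/-- The leg `V₁₃` on `H ⊗ H ⊗ H`. -/
def leg13 (V : Matrix (ι × ι) (ι × ι) ℂ) : Matrix (ι × ι × ι) (ι × ι × ι) ℂ :=
  fun p q => V (p.1, p.2.2) (q.1, q.2.2) * (if p.2.1 = q.2.1 then 1 else 0)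

/-- The leg `V₂₃` on `H ⊗ H ⊗ H`. -/
def leg23 (V : Matrix (ι × ι) (ι × ι) ℂ) : Matrix (ι × ι × ι) (ι × ι × ι) ℂ :=
  fun p q => V (p.2.1, p.2.2) (q.2.1, q.2.2) * (if p.1 = q.1 then 1 else 0)

/-- The pentagon equation `V₁₂ V₁₃ V₂₃ = V₂₃ V₁₂`. -/
def Pentagon (V : Matrix (ι × ι) (ι × ι) ℂ) : Prop :=
  leg12 V * leg13 V * leg23 V = leg23 V * leg12 V

/-- `V` is a multiplicative unitary: a unitary satisfying the pentagon equation. -/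
def IsMU (V : Matrix (ι × ι) (ι × ι) ℂ) : Prop :=
  V * V.conjTranspose = 1 ∧ V.conjTranspose * V = 1 ∧ Pentagon V

/-- `ξ` is a fixed vector for `V`. -/
def Fixed (V : Matrix (ι × ι) (ι × ι) ℂ) (ξ : EuclideanSpace ℂ ι) : Prop :=
  ∀ η, mact V (tens ξ η) = tens ξ η

/-- `ξ` is a cofixed vector for `V`. -/
def Cofixed (V : Matrix (ι × ι) (ι × ι) ℂ) (ξ : EuclideanSpace ℂ ι) : Prop :=
  ∀ η, mact V (tens η ξ) = tens η ξ

/-- `V` has multiplicity 1, with fixed unit vector `e` and cofixed unit vector `eHat`. -/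
def Mult1 (V : Matrix (ι × ι) (ι × ι) ℂ) (e eHat : EuclideanSpace ℂ ι) : Prop :=
  ‖e‖ = 1 ∧ ‖eHat‖ = 1 ∧ Fixed V e ∧ Cofixed V eHat ∧
    (∀ ξ, Fixed V ξ → ∃ c : ℂ, ξ = c • e) ∧
    (∀ ξ, Cofixed V ξ → ∃ c : ℂ, ξ = c • eHat)

/-- A pre-subgroup of `V` (with fixed vector `e`): a unit vector `f` with
`⟨f,e⟩ > 0` and `V(f⊗f) = f⊗f`. -/
def IsPreSubgroup (V : Matrix (ι × ι) (ι × ι) ℂ) (e f : EuclideanSpace ℂ ι) : Prop :=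
  ‖f‖ = 1 ∧ 0 < ⟪f, e⟫_ℂ ∧ mact V (tens f f) = tens f f

/-- The subspace `H^f = {η : V(f⊗η) = f⊗η}`. -/
def subUp (V : Matrix (ι × ι) (ι × ι) ℂ) (f : EuclideanSpace ℂ ι) :
    Submodule ℂ (EuclideanSpace ℂ ι) :=
  LinearMap.ker ((mact V).comp (tensL f) - tensL f)

/-- The subspace `H_f = {η : V(η⊗f) = η⊗f}`. -/
def subDown (V : Matrix (ι × ι) (ι × ι) ℂ) (f : EuclideanSpace ℂ ι) :
    Submodule ℂ (EuclideanSpace ℂ ι) :=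
  LinearMap.ker ((mact V).comp (tensR f) - tensR f)

/-- The slice `L(ω_{ξ,η}) = (ω_{ξ,η} ⊗ id)(V)`. -/
def Lslice (V : Matrix (ι × ι) (ι × ι) ℂ) (ξ η : EuclideanSpace ℂ ι) : Matrix ι ι ℂ :=
  fun a b => ∑ x, ∑ y, (starRingEnd ℂ) (ξ x) * η y * V (x, a) (y, b)

/-- The slice `ρ(ω_{ξ,η}) = (id ⊗ ω_{ξ,η})(V)`. -/
def Rslice (V : Matrix (ι × ι) (ι × ι) ℂ) (ξ η : EuclideanSpace ℂ ι) : Matrix ι ι ℂ :=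
  fun a b => ∑ x, ∑ y, (starRingEnd ℂ) (ξ x) * η y * V (a, x) (b, y)

/-- The slice `L(ω) = (ω ⊗ id)(V)` of a general linear functional `ω` on `L(H)`. -/
def LslF (V : Matrix (ι × ι) (ι × ι) ℂ) (ω : Matrix ι ι ℂ →ₗ[ℂ] ℂ) : Matrix ι ι ℂ :=
  fun a b => ω (fun x y => V (x, a) (y, b))

/-- A state on `L(H)`: a unital positive linear functional. -/
def IsState (ω : Matrix ι ι ℂ →ₗ[ℂ] ℂ) : Prop :=
  ω 1 = 1 ∧ ∀ M : Matrix ι ι ℂ, M.PosSemidef → ∃ r : ℝ, 0 ≤ r ∧ ω M = r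

set_option linter.unusedSectionVars false
set_option maxHeartbeats 1000000
lemma fix_apply {V : Matrix (ι × ι) (ι × ι) ℂ} {ξ η : EuclideanSpace ℂ ι}
    (h : mact V (tens ξ η) = tens ξ η) (p : ι × ι) :
    ∑ q : ι × ι, V p q * (ξ q.1 * η q.2) = ξ p.1 * η p.2 := by
  have := congrArg (fun v => v.ofLp p) h
  simpa [mact, appM, tens] using this

lemma unit_entry {V : Matrix (ι × ι) (ι × ι) ℂ} (hU : V.conjTranspose * V = 1)
    (p r : ι × ι) :
    ∑ q : ι × ι, (starRingEnd ℂ) (V q p) * V q r = if p = r then 1 else 0 := by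
  have := congrFun (congrFun hU p) r
  simpa [Matrix.mul_apply, Matrix.conjTranspose_apply, Matrix.one_apply] using this

lemma unit_entry' {V : Matrix (ι × ι) (ι × ι) ℂ} (hU : V * V.conjTranspose = 1)
    (p r : ι × ι) :
    ∑ q : ι × ι, V p q * (starRingEnd ℂ) (V r q) = if p = r then 1 else 0 := by
  have := congrFun (congrFun hU p) r
  simpa [Matrix.mul_apply, Matrix.conjTranspose_apply, Matrix.one_apply] using this

lemma starfix {V : Matrix (ι × ι) (ι × ι) ℂ} {ξ η : EuclideanSpace ℂ ι}
    (hU : V.conjTranspose * V = 1)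
    (h : mact V (tens ξ η) = tens ξ η) (p : ι × ι) :
    ∑ q : ι × ι, (starRingEnd ℂ) (ξ q.1) * (starRingEnd ℂ) (η q.2) * V q p
      = (starRingEnd ℂ) (ξ p.1) * (starRingEnd ℂ) (η p.2) := by
  have key : ∑ q : ι × ι, (starRingEnd ℂ) (V q p) * (ξ q.1 * η q.2) = ξ p.1 * η p.2 := by
    calc ∑ q : ι × ι, (starRingEnd ℂ) (V q p) * (ξ q.1 * η q.2)
        = ∑ q : ι × ι, (starRingEnd ℂ) (V q p) * (∑ r : ι × ι, V q r * (ξ r.1 * η r.2)) := by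
          refine Finset.sum_congr rfl fun q _ => ?_
          rw [fix_apply h q]
      _ = ∑ r : ι × ι, (∑ q : ι × ι, (starRingEnd ℂ) (V q p) * V q r) * (ξ r.1 * η r.2) := by
          simp_rw [Finset.mul_sum, Finset.sum_mul]
          rw [Finset.sum_comm]
          simp [mul_assoc]
      _ = ∑ r : ι × ι, (if p = r then (1:ℂ) else 0) * (ξ r.1 * η r.2) := by
          refine Finset.sum_congr rfl fun r _ => ?_
          rw [unit_entry hU]
      _ = ξ p.1 * η p.2 := by simp
  have := congrArg (starRingEnd ℂ) key
  simp only [map_sum, map_mul, Complex.conj_conj] at this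
  rw [← this]
  refine Finset.sum_congr rfl fun q _ => ?_
  ring

lemma pent {V : Matrix (ι × ι) (ι × ι) ℂ} (hP : Pentagon V) (x u a y v b : ι) :
    ∑ r, ∑ s, ∑ c, V (x,u) (r,s) * V (r,a) (y,c) * V (s,c) (v,b)
      = ∑ s, V (u,a) (s,b) * V (x,s) (y,v) := by
  have := congrFun (congrFun hP (x,u,a)) (y,v,b)
  simp only [Matrix.mul_apply, leg12, leg13, leg23, Fintype.sum_prod_type,
    mul_ite, mul_one, mul_zero, ite_mul, one_mul, zero_mul,
    Finset.sum_ite_eq, Finset.sum_ite_eq', Finset.mem_univ, if_true] at this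
  simp only [Finset.sum_ite_irrel, Finset.sum_const_zero, Finset.sum_ite_eq,
    Finset.sum_ite_eq', Finset.mem_univ, if_true] at this
  rw [← this]
  simp_rw [Finset.sum_mul]
  rw [Finset.sum_comm]
  exact Finset.sum_congr rfl fun s _ => Finset.sum_comm
lemma sc {f g : ι → ℂ} (h : ∀ x, f x = g x) : ∑ x, f x = ∑ x, g x :=
  Finset.sum_congr rfl fun x _ => h x

lemma flat3 (f : ι → ι → ι → ℂ) :
    ∑ a, ∑ b, ∑ c, f a b c = ∑ z : ι × ι × ι, f z.1 z.2.1 z.2.2 := by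
  simp [Fintype.sum_prod_type]

lemma flat4 (f : ι → ι → ι → ι → ℂ) :
    ∑ a, ∑ b, ∑ c, ∑ d, f a b c d
      = ∑ z : ι × ι × ι × ι, f z.1 z.2.1 z.2.2.1 z.2.2.2 := by
  simp [Fintype.sum_prod_type]

lemma flat5 (f : ι → ι → ι → ι → ι → ℂ) :
    ∑ a, ∑ b, ∑ c, ∑ d, ∑ e, f a b c d e
      = ∑ z : ι × ι × ι × ι × ι, f z.1 z.2.1 z.2.2.1 z.2.2.2.1 z.2.2.2.2 := by
  simp [Fintype.sum_prod_type]

lemma flat7 (f : ι → ι → ι → ι → ι → ι → ι → ℂ) :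
    ∑ a, ∑ b, ∑ c, ∑ d, ∑ e, ∑ g, ∑ h, f a b c d e g h
      = ∑ z : ι × ι × ι × ι × ι × ι × ι,
          f z.1 z.2.1 z.2.2.1 z.2.2.2.1 z.2.2.2.2.1 z.2.2.2.2.2.1 z.2.2.2.2.2.2 := by
  simp [Fintype.sum_prod_type]
lemma fix2 {V : Matrix (ι × ι) (ι × ι) ℂ} {ξ η : EuclideanSpace ℂ ι}
    (h : mact V (tens ξ η) = tens ξ η) (p : ι × ι) :
    ∑ y, ∑ v, V p (y, v) * (ξ y * η v) = ξ p.1 * η p.2 := by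
  have := fix_apply h p
  rwa [Fintype.sum_prod_type] at this

lemma starfix2 {V : Matrix (ι × ι) (ι × ι) ℂ} {ξ η : EuclideanSpace ℂ ι}
    (hU : V.conjTranspose * V = 1)
    (h : mact V (tens ξ η) = tens ξ η) (p : ι × ι) :
    ∑ r, ∑ s, (starRingEnd ℂ) (ξ r) * (starRingEnd ℂ) (η s) * V (r, s) p
      = (starRingEnd ℂ) (ξ p.1) * (starRingEnd ℂ) (η p.2) := by
  have := starfix hU h p
  rwa [Fintype.sum_prod_type] at this

lemma conjstarfix2 {V : Matrix (ι × ι) (ι × ι) ℂ} {ξ η : EuclideanSpace ℂ ι}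
    (hU : V.conjTranspose * V = 1)
    (h : mact V (tens ξ η) = tens ξ η) (p : ι × ι) :
    ∑ r, ∑ s, ξ r * η s * (starRingEnd ℂ) (V (r, s) p) = ξ p.1 * η p.2 := by
  have := congrArg (starRingEnd ℂ) (starfix2 hU h p)
  simp only [map_sum, map_mul, Complex.conj_conj] at this
  exact this

lemma exch (W : ι → ι → ℂ) (V5 : ι → ι → ι → ι → ℂ) (S : ι → ι → ℂ) :
    ∑ x, ∑ u, (∑ r, ∑ s, W r s * V5 r s x u) * S x u
      = ∑ r, ∑ s, W r s * (∑ x, ∑ u, V5 r s x u * S x u) := by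
  simp only [Finset.sum_mul, Finset.mul_sum]
  rw [flat4, flat4]
  exact Fintype.sum_equiv
    ⟨fun z => (z.2.2.1, z.2.2.2, z.1, z.2.1),
     fun z => (z.2.2.1, z.2.2.2, z.1, z.2.1),
     fun z => rfl, fun z => rfl⟩ _ _
    (fun z => by simp only [Equiv.coe_fn_mk]; ring)

lemma key2 {V : Matrix (ι × ι) (ι × ι) ℂ} {ξ₂ η₂ : EuclideanSpace ℂ ι}
    (hP : Pentagon V) (h2 : mact V (tens ξ₂ η₂) = tens ξ₂ η₂) (r s a b : ι) :
    ∑ x, ∑ u, V (r, s) (x, u) *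
        (∑ y, ∑ v, ∑ c, ξ₂ y * η₂ v * (V (x, a) (y, c) * V (u, c) (v, b)))
      = ξ₂ r * ∑ t, η₂ t * V (s, a) (t, b) := by
  calc
    ∑ x, ∑ u, V (r, s) (x, u) *
        (∑ y, ∑ v, ∑ c, ξ₂ y * η₂ v * (V (x, a) (y, c) * V (u, c) (v, b)))
      = ∑ y, ∑ v, ξ₂ y * η₂ v *
          (∑ x, ∑ u, ∑ c, V (r, s) (x, u) * V (x, a) (y, c) * V (u, c) (v, b)) := by
        simp only [Finset.mul_sum]
        rw [flat5, flat5]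
        exact Fintype.sum_equiv
          ⟨fun z => (z.2.2.1, z.2.2.2.1, z.1, z.2.1, z.2.2.2.2),
           fun z => (z.2.2.1, z.2.2.2.1, z.1, z.2.1, z.2.2.2.2),
           fun z => rfl, fun z => rfl⟩ _ _
          (fun z => by simp only [Equiv.coe_fn_mk]; ring)
    _ = ∑ y, ∑ v, ξ₂ y * η₂ v * (∑ t, V (s, a) (t, b) * V (r, t) (y, v)) := by
        refine sc fun y => sc fun v => ?_
        rw [pent hP r s a y v b]
    _ = ∑ t, V (s, a) (t, b) * (∑ y, ∑ v, V (r, t) (y, v) * (ξ₂ y * η₂ v)) := by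
        simp only [Finset.mul_sum]
        rw [flat3, flat3]
        exact Fintype.sum_equiv
          ⟨fun z => (z.2.2, z.1, z.2.1), fun z => (z.2.1, z.2.2, z.1),
           fun z => rfl, fun z => rfl⟩ _ _
          (fun z => by simp only [Equiv.coe_fn_mk]; ring)
    _ = ∑ t, V (s, a) (t, b) * (ξ₂ r * η₂ t) := by
        refine sc fun t => ?_
        rw [fix2 h2 (r, t)]
    _ = ξ₂ r * ∑ t, η₂ t * V (s, a) (t, b) := by
        rw [Finset.mul_sum]
        exact sc fun t => by ring

lemma unit_entry'2 {V : Matrix (ι × ι) (ι × ι) ℂ} (hU : V * V.conjTranspose = 1)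
    (p q : ι × ι) :
    ∑ t, ∑ c, V p (t, c) * (starRingEnd ℂ) (V q (t, c)) = if p = q then 1 else 0 := by
  have := unit_entry' hU p q
  rwa [Fintype.sum_prod_type] at this

lemma Qpt {V : Matrix (ι × ι) (ι × ι) ℂ} (hP : Pentagon V)
    (hU' : V * V.conjTranspose = 1) (a b x u y v : ι) :
    ∑ c, V (a, x) (c, y) * V (c, u) (b, v)
      = ∑ s, ∑ c, ∑ t, V (x, u) (s, c) * V (a, s) (b, t)
          * (starRingEnd ℂ) (V (y, v) (t, c)) := by
  symm
  calc
    ∑ s, ∑ c, ∑ t, V (x, u) (s, c) * V (a, s) (b, t) * (starRingEnd ℂ) (V (y, v) (t, c))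
      = ∑ t, ∑ c, (starRingEnd ℂ) (V (y, v) (t, c)) *
          (∑ s, V (x, u) (s, c) * V (a, s) (b, t)) := by
        simp only [Finset.mul_sum]
        rw [flat3, flat3]
        exact Fintype.sum_equiv
          ⟨fun z => (z.2.2, z.2.1, z.1), fun z => (z.2.2, z.2.1, z.1),
           fun z => rfl, fun z => rfl⟩ _ _
          (fun z => by simp only [Equiv.coe_fn_mk]; ring)
    _ = ∑ t, ∑ c, (starRingEnd ℂ) (V (y, v) (t, c)) *
          (∑ r, ∑ s, ∑ c2, V (a, x) (r, s) * V (r, u) (b, c2) * V (s, c2) (t, c)) := by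
        refine sc fun t => sc fun c => ?_
        rw [pent hP a x u b t c]
    _ = ∑ r, ∑ s, ∑ c2, V (a, x) (r, s) * V (r, u) (b, c2) *
          (∑ t, ∑ c, V (s, c2) (t, c) * (starRingEnd ℂ) (V (y, v) (t, c))) := by
        simp only [Finset.mul_sum]
        rw [flat5, flat5]
        exact Fintype.sum_equiv
          ⟨fun z => (z.2.2.1, z.2.2.2.1, z.2.2.2.2, z.1, z.2.1),
           fun z => (z.2.2.2.1, z.2.2.2.2, z.1, z.2.1, z.2.2.1),
           fun z => rfl, fun z => rfl⟩ _ _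
          (fun z => by simp only [Equiv.coe_fn_mk]; ring)
    _ = ∑ r, ∑ s, ∑ c2, V (a, x) (r, s) * V (r, u) (b, c2) *
          (if (s, c2) = (y, v) then 1 else 0) := by
        refine sc fun r => sc fun s => sc fun c2 => ?_
        rw [unit_entry'2 hU' (s, c2) (y, v)]
    _ = ∑ c, V (a, x) (c, y) * V (c, u) (b, v) := by
        refine sc fun r => ?_
        simp [Prod.mk.injEq, mul_ite, mul_one, mul_zero, ite_and,
          Finset.sum_ite_eq, Finset.sum_ite_eq', Finset.sum_ite_irrel,
          Finset.sum_const_zero]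

/-- product formulas for slices of `V` at fixed elementary tensors. -/
theorem Lslice_mul_Lslice_and_Rslice_mul_Rslice {ι : Type*} [Fintype ι] [DecidableEq ι] [Nonempty ι]
    (V : Matrix (ι × ι) (ι × ι) ℂ) (hV : IsMU V)
    (ξ₁ ξ₂ η₁ η₂ : EuclideanSpace ℂ ι)
    (h1 : mact V (tens ξ₁ η₁) = tens ξ₁ η₁)
    (h2 : mact V (tens ξ₂ η₂) = tens ξ₂ η₂) :
    Lslice V ξ₁ ξ₂ * Lslice V η₁ η₂ = ⟪ξ₁, ξ₂⟫_ℂ • Lslice V η₁ η₂ ∧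
      Rslice V ξ₁ ξ₂ * Rslice V η₁ η₂ = ⟪η₁, η₂⟫_ℂ • Rslice V ξ₁ ξ₂ := by
  obtain ⟨hU', hU, hP⟩ := hV
  have hip1 : ⟪ξ₁, ξ₂⟫_ℂ = ∑ r, (starRingEnd ℂ) (ξ₁ r) * ξ₂ r := by
    simp [PiLp.inner_apply, RCLike.inner_apply]
    exact Finset.sum_congr rfl fun _ _ => mul_comm _ _
  have hip2 : ⟪η₁, η₂⟫_ℂ = ∑ c, (starRingEnd ℂ) (η₁ c) * η₂ c := by
    simp [PiLp.inner_apply, RCLike.inner_apply]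
    exact Finset.sum_congr rfl fun _ _ => mul_comm _ _
  constructor
  · ext a b
    simp only [Matrix.mul_apply, Matrix.smul_apply, smul_eq_mul, Lslice]
    calc
      ∑ c, (∑ x, ∑ y, (starRingEnd ℂ) (ξ₁ x) * ξ₂ y * V (x, a) (y, c)) *
          (∑ u, ∑ v, (starRingEnd ℂ) (η₁ u) * η₂ v * V (u, c) (v, b))
        = ∑ x, ∑ u, ((starRingEnd ℂ) (ξ₁ x) * (starRingEnd ℂ) (η₁ u)) *
            (∑ y, ∑ v, ∑ c, ξ₂ y * η₂ v * (V (x, a) (y, c) * V (u, c) (v, b))) := by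
          simp only [Finset.sum_mul, Finset.mul_sum]
          rw [flat5, flat5]
          exact Fintype.sum_equiv
            ⟨fun z => (z.2.2.2.1, z.2.1, z.2.2.2.2, z.2.2.1, z.1),
             fun z => (z.2.2.2.2, z.2.1, z.2.2.2.1, z.1, z.2.2.1),
             fun z => rfl, fun z => rfl⟩ _ _
            (fun z => by simp only [Equiv.coe_fn_mk]; ring)
      _ = ∑ x, ∑ u, (∑ r, ∑ s, (starRingEnd ℂ) (ξ₁ r) * (starRingEnd ℂ) (η₁ s) * V (r, s) (x, u)) *
            (∑ y, ∑ v, ∑ c, ξ₂ y * η₂ v * (V (x, a) (y, c) * V (u, c) (v, b))) := by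
          refine sc fun x => sc fun u => ?_
          rw [starfix2 hU h1 (x, u)]
      _ = ∑ r, ∑ s, ((starRingEnd ℂ) (ξ₁ r) * (starRingEnd ℂ) (η₁ s)) *
            (∑ x, ∑ u, V (r, s) (x, u) *
              (∑ y, ∑ v, ∑ c, ξ₂ y * η₂ v * (V (x, a) (y, c) * V (u, c) (v, b)))) := by
          have := exch (fun r s => (starRingEnd ℂ) (ξ₁ r) * (starRingEnd ℂ) (η₁ s))
            (fun r s x u => V (r, s) (x, u))
            (fun x u => ∑ y, ∑ v, ∑ c, ξ₂ y * η₂ v * (V (x, a) (y, c) * V (u, c) (v, b)))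
          exact this
      _ = ∑ r, ∑ s, ((starRingEnd ℂ) (ξ₁ r) * (starRingEnd ℂ) (η₁ s)) *
            (ξ₂ r * ∑ t, η₂ t * V (s, a) (t, b)) := by
          refine sc fun r => sc fun s => ?_
          rw [key2 hP h2]
      _ = ⟪ξ₁, ξ₂⟫_ℂ * ∑ s, ∑ t, (starRingEnd ℂ) (η₁ s) * η₂ t * V (s, a) (t, b) := by
          rw [hip1]
          simp only [Finset.sum_mul, Finset.mul_sum]
          rw [flat3, flat3]
          exact Fintype.sum_equiv
            ⟨fun z => (z.2.1, z.2.2, z.1), fun z => (z.2.2, z.1, z.2.1),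
             fun z => rfl, fun z => rfl⟩ _ _
            (fun z => by simp only [Equiv.coe_fn_mk]; ring)
  · ext a b
    simp only [Matrix.mul_apply, Matrix.smul_apply, smul_eq_mul, Rslice]
    calc
      ∑ c, (∑ x, ∑ y, (starRingEnd ℂ) (ξ₁ x) * ξ₂ y * V (a, x) (c, y)) *
          (∑ u, ∑ v, (starRingEnd ℂ) (η₁ u) * η₂ v * V (c, u) (b, v))
        = ∑ x, ∑ y, ∑ u, ∑ v,
            ((starRingEnd ℂ) (ξ₁ x) * ξ₂ y * ((starRingEnd ℂ) (η₁ u) * η₂ v)) *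
            (∑ c, V (a, x) (c, y) * V (c, u) (b, v)) := by
          simp only [Finset.sum_mul, Finset.mul_sum]
          rw [flat5, flat5]
          exact Fintype.sum_equiv
            ⟨fun z => (z.2.2.2.1, z.2.2.2.2, z.2.1, z.2.2.1, z.1),
             fun z => (z.2.2.2.2, z.2.2.1, z.2.2.2.1, z.1, z.2.1),
             fun z => rfl, fun z => rfl⟩ _ _
            (fun z => by simp only [Equiv.coe_fn_mk]; ring)
      _ = ∑ x, ∑ y, ∑ u, ∑ v,
            ((starRingEnd ℂ) (ξ₁ x) * ξ₂ y * ((starRingEnd ℂ) (η₁ u) * η₂ v)) *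
            (∑ s, ∑ c, ∑ t, V (x, u) (s, c) * V (a, s) (b, t)
              * (starRingEnd ℂ) (V (y, v) (t, c))) := by
          refine sc fun x => sc fun y => sc fun u => sc fun v => ?_
          rw [Qpt hP hU' a b x u y v]
      _ = ∑ s, ∑ c, ∑ t, V (a, s) (b, t) *
            ((∑ x, ∑ u, (starRingEnd ℂ) (ξ₁ x) * (starRingEnd ℂ) (η₁ u) * V (x, u) (s, c)) *
             (∑ y, ∑ v, ξ₂ y * η₂ v * (starRingEnd ℂ) (V (y, v) (t, c)))) := by
          simp only [Finset.sum_mul, Finset.mul_sum]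
          rw [flat7, flat7]
          exact Fintype.sum_equiv
            ⟨fun z => (z.2.2.2.2.1, z.2.2.2.2.2.1, z.2.2.2.2.2.2, z.2.1, z.2.2.2.1, z.1, z.2.2.1),
             fun z => (z.2.2.2.2.2.1, z.2.2.2.1, z.2.2.2.2.2.2, z.2.2.2.2.1, z.1, z.2.1, z.2.2.1),
             fun z => rfl, fun z => rfl⟩ _ _
            (fun z => by simp only [Equiv.coe_fn_mk]; ring)
      _ = ∑ s, ∑ c, ∑ t, V (a, s) (b, t) *
            (((starRingEnd ℂ) (ξ₁ s) * (starRingEnd ℂ) (η₁ c)) * (ξ₂ t * η₂ c)) := by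
          refine sc fun s => sc fun c => sc fun t => ?_
          rw [starfix2 hU h1 (s, c), conjstarfix2 hU h2 (t, c)]
      _ = ⟪η₁, η₂⟫_ℂ * ∑ x, ∑ y, (starRingEnd ℂ) (ξ₁ x) * ξ₂ y * V (a, x) (b, y) := by
          rw [hip2]
          simp only [Finset.sum_mul, Finset.mul_sum]
          rw [flat3, flat3]
          exact Fintype.sum_equiv
            ⟨fun z => (z.1, z.2.2, z.2.1), fun z => (z.1, z.2.2, z.2.1),
             fun z => rfl, fun z => rfl⟩ _ _
            (fun z => by simp only [Equiv.coe_fn_mk]; ring)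

end MU
end
end

section
/- Let V be a multiplicative unitary on a finite-dimensional Hilbert space H and f a unit vector with V(f⊗f) = f⊗f. Then every vector ξ in H_f ⊗ H^f satisfies Vξ = ξ, where H_f = {η : V(η⊗f) = η⊗f} and H^f = {η : V(f⊗η) = f⊗η}. -/
open scoped InnerProductSpace ComplexOrder

noncomputable section

namespace MU

variable {ι : Type*} [Fintype ι] [DecidableEq ι]

section Aux

variable {ι : Type*} [Fintype ι] [DecidableEq ι]

lemma mact_eq_mulVec {κ : Type*} [Fintype κ] (M : Matrix κ κ ℂ) (v : EuclideanSpace ℂ κ) :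
    (mact M v).ofLp = M.mulVec v.ofLp := rfl

/-- triple elementary tensor -/
def t3 (a f b : EuclideanSpace ℂ ι) : ι × ι × ι → ℂ :=
  fun p => a p.1 * f p.2.1 * b p.2.2

lemma sum_ite_const {α : Type*} (s : Finset α) (c : Prop) [Decidable c] (g : α → ℂ) :
    (∑ x ∈ s, if c then g x else 0) = if c then ∑ x ∈ s, g x else 0 := by
  split_ifs <;> simp

lemma leg12_mul (A B : Matrix (ι × ι) (ι × ι) ℂ) :
    leg12 A * leg12 B = leg12 (A * B) := by
  ext p q
  simp only [Matrix.mul_apply, leg12, Fintype.sum_prod_type, mul_ite, ite_mul,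
    mul_one, mul_zero, zero_mul, one_mul, sum_ite_const, Finset.sum_ite_eq,
    Finset.mem_univ, if_true]
  by_cases h : p.2.2 = q.2.2 <;>
    simp [h, Finset.sum_mul, Finset.mul_sum] <;>
    exact Finset.sum_comm _ _ _

lemma leg12_one : leg12 (1 : Matrix (ι × ι) (ι × ι) ℂ) = 1 := by
  ext p q
  simp only [leg12, Matrix.one_apply, Prod.ext_iff, ite_mul, one_mul, zero_mul,
    mul_ite, mul_one, mul_zero]
  by_cases h1 : p.1 = q.1 <;> by_cases h2 : p.2.1 = q.2.1 <;>
    by_cases h3 : p.2.2 = q.2.2 <;> simp [h1, h2, h3]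

lemma leg12_mulVec_t3 (A : Matrix (ι × ι) (ι × ι) ℂ) (a f b : EuclideanSpace ℂ ι)
    (h : A.mulVec (tens a f).ofLp = (tens a f).ofLp) :
    (leg12 A).mulVec (t3 a f b) = t3 a f b := by
  funext p
  have h2 := congrFun h (p.1, p.2.1)
  simp only [Matrix.mulVec, dotProduct, tens, WithLp.ofLp_toLp] at h2
  simp only [Matrix.mulVec, dotProduct, leg12, t3, Fintype.sum_prod_type,
    mul_ite, ite_mul, mul_one, mul_zero, zero_mul, sum_ite_const, Finset.sum_ite_eq,
    Finset.mem_univ, if_true]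
  calc (∑ x, ∑ y, A (p.1, p.2.1) (x, y) * (a x * f y * b p.2.2))
      = (∑ x : ι × ι, A (p.1, p.2.1) x * (a x.1 * f x.2)) * b p.2.2 := by
        rw [Fintype.sum_prod_type, Finset.sum_mul]
        refine Finset.sum_congr rfl fun x _ => ?_
        rw [Finset.sum_mul]
        exact Finset.sum_congr rfl fun y _ => by ring
    _ = a p.1 * f p.2.1 * b p.2.2 := by rw [h2]

lemma leg23_mulVec_t3 (A : Matrix (ι × ι) (ι × ι) ℂ) (a f b : EuclideanSpace ℂ ι)
    (h : A.mulVec (tens f b).ofLp = (tens f b).ofLp) :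
    (leg23 A).mulVec (t3 a f b) = t3 a f b := by
  funext p
  have h2 := congrFun h p.2
  simp only [Matrix.mulVec, dotProduct, tens, WithLp.ofLp_toLp] at h2
  simp only [Matrix.mulVec, dotProduct, leg23, t3, Fintype.sum_prod_type,
    mul_ite, ite_mul, mul_one, mul_zero, zero_mul, sum_ite_const, Finset.sum_ite_eq,
    Finset.mem_univ, if_true]
  calc (∑ x, ∑ y, A p.2 (x, y) * (a p.1 * f x * b y))
      = a p.1 * ∑ x : ι × ι, A p.2 x * (f x.1 * b x.2) := by
        rw [Fintype.sum_prod_type, Finset.mul_sum]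
        refine Finset.sum_congr rfl fun x _ => ?_
        rw [Finset.mul_sum]
        exact Finset.sum_congr rfl fun y _ => by ring
    _ = a p.1 * (f p.2.1 * b p.2.2) := by rw [h2]
    _ = a p.1 * f p.2.1 * b p.2.2 := by ring

lemma leg13_mulVec_t3 (A : Matrix (ι × ι) (ι × ι) ℂ) (a f b : EuclideanSpace ℂ ι) :
    (leg13 A).mulVec (t3 a f b) =
      fun p => f p.2.1 * (A.mulVec (tens a b).ofLp) (p.1, p.2.2) := by
  funext p
  simp only [Matrix.mulVec, dotProduct, leg13, t3, tens, WithLp.ofLp_toLp, Fintype.sum_prod_type,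
    mul_ite, ite_mul, mul_one, mul_zero, zero_mul, sum_ite_const, Finset.sum_ite_eq,
    Finset.mem_univ, if_true]
  rw [Finset.mul_sum]
  refine Finset.sum_congr rfl fun x _ => ?_
  rw [Finset.mul_sum]
  exact Finset.sum_congr rfl fun y _ => by ring

lemma key_lemma (V : Matrix (ι × ι) (ι × ι) ℂ) (hV : IsMU V)
    (f : EuclideanSpace ℂ ι) (hfne : ∃ j, f j ≠ 0)
    (a b : EuclideanSpace ℂ ι)
    (ha : mact V (tens a f) = tens a f) (hb : mact V (tens f b) = tens f b) :
    mact V (tens a b) = tens a b := by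
  obtain ⟨hVu1, hVu2, hpent⟩ := hV
  replace ha := congrArg WithLp.ofLp ha
  replace hb := congrArg WithLp.ofLp hb
  rw [mact_eq_mulVec] at ha hb
  apply WithLp.ofLp_injective
  rw [mact_eq_mulVec]
  have ha' : V.conjTranspose.mulVec (tens a f).ofLp = (tens a f).ofLp := by
    conv_lhs => rw [← ha]
    rw [Matrix.mulVec_mulVec, hVu2, Matrix.one_mulVec]
  have h12 : (leg12 V).mulVec (t3 a f b) = t3 a f b := leg12_mulVec_t3 V a f b ha
  have h12' : (leg12 V.conjTranspose).mulVec (t3 a f b) = t3 a f b :=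
    leg12_mulVec_t3 _ a f b ha'
  have h23 : (leg23 V).mulVec (t3 a f b) = t3 a f b := leg23_mulVec_t3 V a f b hb
  have hp : (leg12 V).mulVec ((leg13 V).mulVec ((leg23 V).mulVec (t3 a f b)))
      = (leg23 V).mulVec ((leg12 V).mulVec (t3 a f b)) := by
    rw [Matrix.mulVec_mulVec, Matrix.mulVec_mulVec, Matrix.mulVec_mulVec]
    rw [Pentagon] at hpent
    rw [hpent]
  rw [h23, h12, h23] at hp
  -- hp : (leg12 V).mulVec ((leg13 V).mulVec (t3 a f b)) = t3 a f b
  have h13 : (leg13 V).mulVec (t3 a f b) = t3 a f b := by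
    have h := congrArg (fun w => (leg12 V.conjTranspose).mulVec w) hp
    beta_reduce at h
    rw [Matrix.mulVec_mulVec, leg12_mul, hVu2, leg12_one, Matrix.one_mulVec, h12'] at h
    exact h
  obtain ⟨j, hj⟩ := hfne
  funext p
  have h1 := congrFun (leg13_mulVec_t3 V a f b) (p.1, j, p.2)
  rw [h13] at h1
  have h1' : a p.1 * f j * b p.2 = f j * V.mulVec (tens a b).ofLp p := h1
  apply mul_left_cancel₀ hj
  rw [← h1']
  show a p.1 * f j * b p.2 = f j * (a p.1 * b p.2)
  ring

end Aux

/-- every vector of `H_f ⊗ H^f` is fixed by `V`. -/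
theorem fixed_on_subDown_tensor_subUp {ι : Type*} [Fintype ι] [DecidableEq ι] [Nonempty ι]
    (V : Matrix (ι × ι) (ι × ι) ℂ) (hV : IsMU V)
    (f : EuclideanSpace ℂ ι) (hf : ‖f‖ = 1)
    (hff : mact V (tens f f) = tens f f) :
    ∀ w ∈ Submodule.span ℂ
        {w | ∃ a ∈ subDown V f, ∃ b ∈ subUp V f, w = tens a b},
      mact V w = w := by
  have hfne : ∃ j, f j ≠ 0 := by
    by_contra h
    push_neg at h
    have : f = 0 := by ext i; simp [h]
    rw [this, norm_zero] at hf
    exact one_ne_zero hf.symm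
  intro w hw
  refine Submodule.span_induction (p := fun w _ => mact V w = w) ?_ ?_ ?_ ?_ hw
  · rintro x ⟨a, ha, b, hb, rfl⟩
    rw [subDown, LinearMap.mem_ker, LinearMap.sub_apply, LinearMap.comp_apply,
      sub_eq_zero] at ha
    rw [subUp, LinearMap.mem_ker, LinearMap.sub_apply, LinearMap.comp_apply,
      sub_eq_zero] at hb
    exact key_lemma V hV f hfne a b ha hb
  · exact map_zero (mact V)
  · intro x y _ _ hx hy
    rw [map_add, hx, hy]
  · intro c x _ hx
    rw [map_smul, hx]

end MU
end
end
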